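/- Let α > 1 and for β > 0 let ρ(β) be the unique positive real with β·Ψ(ρ(β)·β^α) = 1. Then β^{α−1}·ρ(β) → 1 as β → 0⁺; in particular, since α > 1, ρ(β) → +∞ as β → 0⁺. -/

import Mathlib

open MeasureTheory Real Filter Set

/-- `g(u) = ∫₀ᵘ v^α/(1-v) dv`. -/
noncomputable def gfun (α : ℝ) (u : ℝ) : ℝ := ∫ v in (0:ℝ)..u, v ^ α / (1 - v)

/-- `Ψ(x) = ∫₀¹ (1-u)⁻¹ exp(-x g(u)) du`. -/
noncomputable def Psi (α : ℝ) (x : ℝ) : ℝ :=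
  ∫ u in (0:ℝ)..1, (1 - u)⁻¹ * Real.exp (-x * gfun α u)


lemma contOn_gint {α : ℝ} (hα : 0 < α) :
    ContinuousOn (fun v : ℝ => v ^ α / (1 - v)) (Iio 1) := by
  apply ContinuousOn.div
  · exact fun x hx => (Real.continuousAt_rpow_const x α (Or.inr hα.le)).continuousWithinAt
  · exact (continuous_const.sub continuous_id).continuousOn
  · intro x hx; simp only [mem_Iio] at hx; linarith

lemma gint_intble {α : ℝ} (hα : 0 < α) {u : ℝ} (h0 : 0 ≤ u) (h1 : u < 1) :
    IntervalIntegrable (fun v : ℝ => v ^ α / (1 - v)) volume 0 u := by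
  apply ContinuousOn.intervalIntegrable
  apply (contOn_gint hα).mono
  rw [uIcc_of_le h0]
  exact fun x hx => lt_of_le_of_lt hx.2 h1

lemma inv_intble {u : ℝ} (h0 : 0 ≤ u) (h1 : u < 1) :
    IntervalIntegrable (fun v : ℝ => (1 - v)⁻¹) volume 0 u := by
  apply ContinuousOn.intervalIntegrable
  intro x hx
  rw [uIcc_of_le h0] at hx
  exact ((continuous_const.sub continuous_id).continuousAt.inv₀ (by simp; linarith [hx.2])).continuousWithinAt

lemma integral_inv_sub {u : ℝ} (h0 : 0 ≤ u) (h1 : u < 1) :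
    ∫ v in (0:ℝ)..u, (1 - v)⁻¹ = -Real.log (1 - u) := by
  have : ∀ v ∈ uIcc (0:ℝ) u, HasDerivAt (fun t => -Real.log (1 - t)) ((1 - v)⁻¹) v := by
    intro v hv
    rw [uIcc_of_le h0] at hv
    have hne : (1 : ℝ) - v ≠ 0 := by cases hv; intro h; nlinarith
    have h1d : HasDerivAt (fun t : ℝ => 1 - t) (-1) v := by
      simpa using (hasDerivAt_id v).const_sub 1
    have := (Real.hasDerivAt_log hne).comp v h1d
    have h2 := this.neg
    simp only [mul_neg, mul_one, neg_neg] at h2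
    exact h2
  rw [intervalIntegral.integral_eq_sub_of_hasDerivAt this (inv_intble h0 h1)]
  simp

lemma gfun_nonneg {α : ℝ} (hα : 0 < α) {u : ℝ} (h0 : 0 ≤ u) (h1 : u < 1) :
    0 ≤ gfun α u := by
  apply intervalIntegral.integral_nonneg h0
  intro v hv
  apply div_nonneg (Real.rpow_nonneg hv.1 α)
  linarith [hv.2]

lemma gfun_le {α : ℝ} (hα : 0 < α) {u : ℝ} (h0 : 0 ≤ u) (h1 : u < 1) :
    gfun α u ≤ -Real.log (1 - u) := by
  rw [← integral_inv_sub h0 h1]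
  apply intervalIntegral.integral_mono_on h0 (gint_intble hα h0 h1) (inv_intble h0 h1)
  intro v hv
  have hv1 : v < 1 := lt_of_le_of_lt hv.2 h1
  have h1v : (0:ℝ) < 1 - v := by linarith
  rw [div_eq_mul_inv]
  calc v ^ α * (1 - v)⁻¹ ≤ 1 * (1 - v)⁻¹ := by
        apply mul_le_mul_of_nonneg_right _ (inv_nonneg.2 h1v.le)
        exact Real.rpow_le_one hv.1 hv1.le hα.le
    _ = (1 - v)⁻¹ := one_mul _

lemma le_gfun {α : ℝ} (hα : 1 ≤ α) {u : ℝ} (h0 : 0 ≤ u) (h1 : u < 1) :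
    -Real.log (1 - u) - α ≤ gfun α u := by
  have hα0 : (0:ℝ) < α := lt_of_lt_of_le one_pos hα
  have key : ∫ v in (0:ℝ)..u, ((1 - v)⁻¹ - α) = -Real.log (1 - u) - α * u := by
    rw [intervalIntegral.integral_sub (inv_intble h0 h1) intervalIntegrable_const,
      integral_inv_sub h0 h1]
    simp [mul_comm]
  have : -Real.log (1 - u) - α ≤ ∫ v in (0:ℝ)..u, ((1 - v)⁻¹ - α) := by
    rw [key]
    have : α * u ≤ α * 1 := mul_le_mul_of_nonneg_left h1.le hα0.le
    linarith
  refine le_trans this ?_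
  apply intervalIntegral.integral_mono_on h0
    ((inv_intble h0 h1).sub intervalIntegrable_const) (gint_intble hα0 h0 h1)
  intro v hv
  have hv1 : v < 1 := lt_of_le_of_lt hv.2 h1
  have h1v : (0:ℝ) < 1 - v := by linarith
  rw [div_eq_mul_inv, sub_le_iff_le_add]
  have hber : 1 + α * (v - 1) ≤ v ^ α := by
    have := one_add_mul_self_le_rpow_one_add (by linarith [hv.1] : (-1:ℝ) ≤ v - 1) hα
    simpa using this
  have : (1:ℝ) - α * (1 - v) ≤ v ^ α := by nlinarith
  calc (1 - v)⁻¹ = (1 - α * (1-v)) * (1-v)⁻¹ + α * ((1-v) * (1-v)⁻¹) := by ring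
    _ = (1 - α * (1-v)) * (1-v)⁻¹ + α := by rw [mul_inv_cancel₀ h1v.ne']; ring
    _ ≤ v ^ α * (1-v)⁻¹ + α := by
        have := mul_le_mul_of_nonneg_right this (inv_nonneg.2 h1v.le)
        linarith



lemma gfun_contOn {α : ℝ} (hα : 0 < α) : ContinuousOn (gfun α) (Ioo 0 1) := by
  intro u hu
  obtain ⟨hu0, hu1⟩ := hu
  have hmem : Iio (1:ℝ) ∈ nhds u := Iio_mem_nhds hu1
  have hc : ContinuousAt (fun v : ℝ => v ^ α / (1 - v)) u :=
    (contOn_gint hα).continuousAt hmem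
  have hms : StronglyMeasurableAtFilter (fun v : ℝ => v ^ α / (1 - v)) (nhds u) volume := by
    exact ⟨Iio 1, hmem, ((contOn_gint hα).aemeasurable measurableSet_Iio).aestronglyMeasurable⟩
  have := (intervalIntegral.integral_hasDerivAt_right (gint_intble hα hu0.le hu1) hms hc)
  exact this.continuousAt.continuousWithinAt

-- integrability of (1-u)^(x-1) on [0,1]
lemma onepow_intble {x : ℝ} (hx : 0 < x) :
    IntervalIntegrable (fun u : ℝ => (1 - u) ^ (x - 1)) volume 0 1 := by
  have h : IntervalIntegrable (fun u : ℝ => u ^ (x - 1)) volume 0 1 :=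
    intervalIntegral.intervalIntegrable_rpow' (by linarith)
  have := (h.comp_sub_left 1)
  simpa using this.symm

lemma onepow_integral {x : ℝ} (hx : 0 < x) :
    ∫ u in (0:ℝ)..1, (1 - u) ^ (x - 1) = 1 / x := by
  rw [show (fun u : ℝ => (1 - u) ^ (x-1)) = (fun u : ℝ => ((fun t : ℝ => t ^ (x-1)) (1 - u))) from rfl,
    intervalIntegral.integral_comp_sub_left (fun t : ℝ => t ^ (x-1)) 1]
  norm_num
  rw [integral_rpow (Or.inl (by linarith))]
  rw [Real.zero_rpow (by linarith : x - 1 + 1 ≠ 0)]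
  norm_num



section
variable {α : ℝ}

/-- the Psi integrand -/
noncomputable def F (α x u : ℝ) : ℝ := (1 - u)⁻¹ * Real.exp (-x * gfun α u)

variable (hα : 1 ≤ α)
include hα

lemma F_lb {x : ℝ} (hx : 0 < x) {u : ℝ} (h0 : 0 < u) (h1 : u < 1) :
    (1 - u) ^ (x - 1) ≤ F α x u := by
  have h1u : (0:ℝ) < 1 - u := by linarith
  have hg : gfun α u ≤ -Real.log (1 - u) := gfun_le (by linarith : (0:ℝ) < α) h0.le h1
  have : x * Real.log (1 - u) ≤ -x * gfun α u := by nlinarith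
  calc (1 - u) ^ (x - 1) = (1 - u)⁻¹ * (1 - u) ^ x := by
        rw [Real.rpow_sub h1u, Real.rpow_one]; ring
    _ = (1 - u)⁻¹ * Real.exp (x * Real.log (1 - u)) := by
        rw [Real.rpow_def_of_pos h1u, mul_comm (Real.log (1-u))]
    _ ≤ F α x u := by
        unfold F
        exact mul_le_mul_of_nonneg_left (Real.exp_le_exp.2 this) (inv_nonneg.2 h1u.le)

lemma F_ub {x : ℝ} (hx : 0 < x) {u : ℝ} (h0 : 0 < u) (h1 : u < 1) :
    F α x u ≤ Real.exp (α * x) * (1 - u) ^ (x - 1) := by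
  have h1u : (0:ℝ) < 1 - u := by linarith
  have hg : -Real.log (1 - u) - α ≤ gfun α u := le_gfun hα h0.le h1
  have : -x * gfun α u ≤ x * Real.log (1 - u) + α * x := by nlinarith
  calc F α x u ≤ (1 - u)⁻¹ * Real.exp (x * Real.log (1 - u) + α * x) := by
        unfold F
        exact mul_le_mul_of_nonneg_left (Real.exp_le_exp.2 this) (inv_nonneg.2 h1u.le)
    _ = Real.exp (α * x) * ((1 - u)⁻¹ * (1 - u) ^ x) := by
        rw [Real.exp_add, Real.rpow_def_of_pos h1u, mul_comm (Real.log (1-u))]; ring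
    _ = Real.exp (α * x) * (1 - u) ^ (x - 1) := by
        rw [Real.rpow_sub h1u, Real.rpow_one]; ring

lemma F_contOn (x : ℝ) : ContinuousOn (F α x) (Ioo 0 1) := by
  apply ContinuousOn.mul
  · apply ContinuousOn.inv₀ (continuous_const.sub continuous_id).continuousOn
    intro u hu; obtain ⟨_, h1⟩ := hu; intro h; simp at h; linarith
  · exact (Real.continuous_exp.comp_continuousOn
      (((gfun_contOn (by linarith : (0:ℝ) < α)).const_smul (-x)).congr (fun u hu => by simp [smul_eq_mul])))

lemma F_meas (x : ℝ) : AEStronglyMeasurable (F α x) (volume.restrict (Set.uIoc (0:ℝ) 1)) := by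
  rw [uIoc_of_le (by norm_num : (0:ℝ) ≤ 1),
    ← Measure.restrict_congr_set Ioo_ae_eq_Ioc]
  exact ((F_contOn hα x).aemeasurable measurableSet_Ioo).aestronglyMeasurable

omit hα in
lemma ae_Ioo : ∀ᵐ u ∂(volume.restrict (Set.uIoc (0:ℝ) 1)), u ∈ Ioo (0:ℝ) 1 := by
  rw [uIoc_of_le (by norm_num : (0:ℝ) ≤ 1),
    ← Measure.restrict_congr_set Ioo_ae_eq_Ioc]
  exact ae_restrict_mem measurableSet_Ioo

lemma F_intble {x : ℝ} (hx : 0 < x) : IntervalIntegrable (F α x) volume 0 1 := by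
  apply IntervalIntegrable.mono_fun ((onepow_intble hx).const_mul (Real.exp (α * x))) (F_meas hα x)
  filter_upwards [ae_Ioo] with u hu
  have h1u : (0:ℝ) < 1 - u := by linarith [hu.2]
  have hFnn : 0 ≤ F α x u := mul_nonneg (inv_nonneg.2 h1u.le) (Real.exp_nonneg _)
  rw [Real.norm_eq_abs, Real.norm_eq_abs, abs_of_nonneg hFnn, abs_of_nonneg
    (mul_nonneg (Real.exp_nonneg _) (Real.rpow_nonneg h1u.le _))]
  exact F_ub hα hx hu.1 hu.2

lemma Psi_lb {x : ℝ} (hx : 0 < x) : 1 / x ≤ Psi α x := by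
  rw [← onepow_integral hx]
  apply intervalIntegral.integral_mono_ae_restrict (by norm_num : (0:ℝ) ≤ 1)
    (onepow_intble hx) (F_intble hα hx)
  rw [← Measure.restrict_congr_set Ioo_ae_eq_Icc]
  filter_upwards [ae_restrict_mem measurableSet_Ioo] with u hu
  exact F_lb hα hx hu.1 hu.2

lemma Psi_ub {x : ℝ} (hx : 0 < x) : Psi α x ≤ Real.exp (α * x) / x := by
  have : Psi α x ≤ ∫ u in (0:ℝ)..1, Real.exp (α * x) * (1 - u) ^ (x - 1) := by
    apply intervalIntegral.integral_mono_ae_restrict (by norm_num : (0:ℝ) ≤ 1)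
      (F_intble hα hx) ((onepow_intble hx).const_mul _)
    rw [← Measure.restrict_congr_set Ioo_ae_eq_Icc]
    filter_upwards [ae_restrict_mem measurableSet_Ioo] with u hu
    exact F_ub hα hx hu.1 hu.2
  rwa [intervalIntegral.integral_const_mul, onepow_integral hx, mul_one_div] at this

lemma Psi_anti {x y : ℝ} (hy : 0 < y) (hxy : y ≤ x) : Psi α x ≤ Psi α y := by
  have hx : 0 < x := lt_of_lt_of_le hy hxy
  apply intervalIntegral.integral_mono_ae_restrict (by norm_num : (0:ℝ) ≤ 1)
    (F_intble hα hx) (F_intble hα hy)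
  rw [← Measure.restrict_congr_set Ioo_ae_eq_Icc]
  filter_upwards [ae_restrict_mem measurableSet_Ioo] with u hu
  have h1u : (0:ℝ) < 1 - u := by linarith [hu.2]
  have hg : 0 ≤ gfun α u := gfun_nonneg (by linarith) hu.1.le hu.2
  apply mul_le_mul_of_nonneg_left _ (inv_nonneg.2 h1u.le)
  apply Real.exp_le_exp.2
  nlinarith

end



lemma xPsi_tendsto {α : ℝ} (hα : 1 ≤ α) :
    Tendsto (fun x => x * Psi α x) (nhdsWithin 0 (Set.Ioi 0)) (nhds 1) := by
  have hub : Tendsto (fun x : ℝ => Real.exp (α * x)) (nhdsWithin 0 (Set.Ioi 0)) (nhds 1) := by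
    have : Tendsto (fun x : ℝ => Real.exp (α * x)) (nhds 0) (nhds 1) := by
      have hc : Continuous fun x : ℝ => Real.exp (α * x) := by continuity
      have := hc.tendsto 0
      simpa using this
    exact this.mono_left nhdsWithin_le_nhds
  refine tendsto_of_tendsto_of_tendsto_of_le_of_le' tendsto_const_nhds hub ?_ ?_
  · filter_upwards [self_mem_nhdsWithin] with x hx
    have hx : (0:ℝ) < x := hx
    have := Psi_lb hα hx
    calc (1:ℝ) = x * (1/x) := by field_simp
      _ ≤ x * Psi α x := by exact mul_le_mul_of_nonneg_left this hx.le
  · filter_upwards [self_mem_nhdsWithin] with x hx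
    have hx : (0:ℝ) < x := hx
    have := Psi_ub hα hx
    calc x * Psi α x ≤ x * (Real.exp (α * x) / x) := mul_le_mul_of_nonneg_left this hx.le
      _ = Real.exp (α * x) := by field_simp

/-- if, for every `β > 0`, `ρ(β)` is a positive real with
`β Ψ(ρ(β) β^α) = 1`, then `β^{α-1} ρ(β) → 1` as `β → 0⁺`, and in particular
`ρ(β) → ∞` as `β → 0⁺`. -/
theorem rho_asymptotics_at_zero
    (α : ℝ) (hα : 1 < α) (ρ : ℝ → ℝ)
    (hρ : ∀ β : ℝ, 0 < β → 0 < ρ β ∧ β * Psi α (ρ β * β ^ α) = 1) :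
    Tendsto (fun β => β ^ (α - 1) * ρ β) (nhdsWithin 0 (Set.Ioi 0)) (nhds 1) ∧
    Tendsto ρ (nhdsWithin 0 (Set.Ioi 0)) atTop := by
  have hα1 : (1:ℝ) ≤ α := hα.le
  set X : ℝ → ℝ := fun β => ρ β * β ^ α with hX
  have hXpos : ∀ β : ℝ, 0 < β → 0 < X β := fun β hβ =>
    mul_pos (hρ β hβ).1 (Real.rpow_pos_of_pos hβ α)
  have hPsiX : ∀ β : ℝ, 0 < β → Psi α (X β) = 1 / β := by
    intro β hβ
    have h := (hρ β hβ).2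
    field_simp at h ⊢
    linarith
  -- X → 0 within Ioi 0
  have hX0 : Tendsto X (nhdsWithin 0 (Set.Ioi 0)) (nhdsWithin 0 (Set.Ioi 0)) := by
    rw [tendsto_nhdsWithin_iff]
    constructor
    · rw [Metric.tendsto_nhdsWithin_nhds]
      intro ε hε
      -- choose δ with 1/δ > Psi α ε, i.e. δ < 1/(Psi α ε) and δ > 0
      have hPε : 0 < Psi α ε := lt_of_lt_of_le (by positivity) (Psi_lb hα1 hε)
      refine ⟨min (1 / (2 * Psi α ε)) 1, by positivity, ?_⟩
      intro β hβ hd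
      have hβ0 : (0:ℝ) < β := hβ
      rw [Real.dist_eq, sub_zero, abs_of_pos hβ0] at hd
      have hβlt : β < 1 / Psi α ε := by
        have h1 : β < 1 / (2 * Psi α ε) := lt_of_lt_of_le hd (min_le_left _ _)
        have : 1 / (2 * Psi α ε) < 1 / Psi α ε := by
          rw [div_lt_div_iff₀ (by positivity) hPε]; nlinarith
        linarith
      have hgt : Psi α ε < 1 / β := by
        rw [lt_div_iff₀ hβ0]
        have := (lt_div_iff₀ hPε).1 hβlt
        linarith
      by_contra hc
      push_neg at hc
      have hXε : ε ≤ X β := by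
        rw [Real.dist_eq, sub_zero, abs_of_pos (hXpos β hβ0)] at hc
        exact hc
      have := Psi_anti hα1 hε hXε
      rw [hPsiX β hβ0] at this
      linarith
    · filter_upwards [self_mem_nhdsWithin] with β hβ
      exact hXpos β hβ
  have hcomp : Tendsto (fun β => X β * Psi α (X β)) (nhdsWithin 0 (Set.Ioi 0)) (nhds 1) :=
    (xPsi_tendsto hα1).comp hX0
  have heq : ∀ᶠ β in nhdsWithin 0 (Set.Ioi (0:ℝ)), X β * Psi α (X β) = β ^ (α - 1) * ρ β := by
    filter_upwards [self_mem_nhdsWithin] with β hβ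
    have hβ0 : (0:ℝ) < β := hβ
    rw [hPsiX β hβ0, hX]
    rw [Real.rpow_sub hβ0, Real.rpow_one]
    field_simp
  have h1 : Tendsto (fun β => β ^ (α - 1) * ρ β) (nhdsWithin 0 (Set.Ioi 0)) (nhds 1) :=
    hcomp.congr' heq
  refine ⟨h1, ?_⟩
  -- ρ β = β^(1-α) * (β^(α-1) * ρ β)
  have hpow : Tendsto (fun β : ℝ => β ^ (1 - α)) (nhdsWithin 0 (Set.Ioi 0)) atTop := by
    have h2 : Tendsto (fun β : ℝ => (β⁻¹) ^ (α - 1)) (nhdsWithin 0 (Set.Ioi 0)) atTop :=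
      (tendsto_rpow_atTop (by linarith)).comp tendsto_inv_nhdsGT_zero
    apply h2.congr'
    filter_upwards [self_mem_nhdsWithin] with β hβ
    have hβ0 : (0:ℝ) < β := hβ
    show β⁻¹ ^ (α - 1) = β ^ (1 - α)
    rw [Real.inv_rpow hβ0.le, ← Real.rpow_neg hβ0.le, neg_sub]
  have := hpow.atTop_mul_pos one_pos h1
  apply this.congr'
  filter_upwards [self_mem_nhdsWithin] with β hβ
  have hβ0 : (0:ℝ) < β := hβ
  rw [← mul_assoc, ← Real.rpow_add hβ0]
  norm_num
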